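/- Let n ≥ 2, let E be the Euclidean space ℝ^{n−2}, and for each integer m ≥ 1 define F_m : ℂ × E → ℂ × E by F_m(z, y) = (g_m(z), y), where g_m is the winding mapping of order m (this is the mapping (r cos φ, r sin φ, x₃, …, x_n) ↦ (r cos mφ, r sin mφ, x₃, …, x_n) of ℝⁿ). Then each F_m is continuous, fixes the origin, and maps the closed unit ball B̄ = {(z, y) : |z|² + ‖y‖² ≤ 1} onto itself, yet the family {F_m}_{m=1}^∞ is not equicontinuous at any point (z₀, y₀) of the unit sphere {(z, y) : |z|² + ‖y‖² = 1} with z₀ ≠ 0. -/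

import Mathlib

/-- The winding mapping of order `m`: in polar coordinates `z = r e^{iφ}`,
`g_m(z) = r e^{imφ}`, i.e. `g_m(z) = |z| (z/|z|)^m` for `z ≠ 0` and `g_m(0) = 0`. -/
noncomputable def winding (m : ℕ) (z : ℂ) : ℂ :=
  if z = 0 then 0 else (‖z‖ : ℂ) * (z / (‖z‖ : ℂ)) ^ m


lemma winding_zero (m : ℕ) : winding m 0 = 0 := by simp [winding]

lemma winding_ne_zero (m : ℕ) {z : ℂ} (hz : z ≠ 0) :
    winding m z = (‖z‖ : ℂ) * (z / (‖z‖ : ℂ)) ^ m := by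
  simp [winding, hz]

lemma abs_winding (m : ℕ) (z : ℂ) : ‖winding m z‖ = ‖z‖ := by
  rcases eq_or_ne z 0 with rfl | hz
  · simp [winding]
  · have habs : ‖z‖ ≠ 0 := by simpa using hz
    rw [winding_ne_zero m hz]
    simp [norm_mul, norm_pow, norm_div, Complex.norm_real, abs_of_nonneg (norm_nonneg z),
      div_self habs]

lemma continuous_winding (m : ℕ) : Continuous (winding m) := by
  rw [continuous_iff_continuousAt]
  intro z
  rcases eq_or_ne z 0 with rfl | hz
  · rw [ContinuousAt, winding_zero]
    rw [tendsto_zero_iff_norm_tendsto_zero]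
    have : (fun z : ℂ => ‖winding m z‖) = fun z : ℂ => ‖z‖ := by
      funext w; simpa using abs_winding m w
    rw [this]
    simpa using (continuous_norm (E := ℂ)).tendsto (0 : ℂ)
  · have hcong : winding m =ᶠ[nhds z]
        (fun w => (‖w‖ : ℂ) * (w / (‖w‖ : ℂ)) ^ m) := by
      filter_upwards [isOpen_compl_singleton.mem_nhds hz] with w hw
      exact winding_ne_zero m hw
    refine ContinuousAt.congr ?_ hcong.symm
    have habs : (‖z‖ : ℂ) ≠ 0 := by
      simpa using hz
    have h1 : ContinuousAt (fun w : ℂ => (‖w‖ : ℂ)) z :=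
      (Complex.continuous_ofReal.comp continuous_norm).continuousAt
    exact h1.mul ((continuousAt_id.div h1 habs).pow m)

lemma winding_surj_abs (m : ℕ) (hm : 1 ≤ m) (w : ℂ) :
    ∃ z : ℂ, ‖z‖ = ‖w‖ ∧ winding m z = w := by
  rcases eq_or_ne w 0 with rfl | hw
  · exact ⟨0, by simp, winding_zero m⟩
  · set v : ℂ := Complex.exp ((w.arg / m) * Complex.I) with hv
    have hvabs : ‖v‖ = 1 := by
      rw [hv]
      simpa using Complex.norm_exp_ofReal_mul_I (w.arg / m)
    have hvm : v ^ m = Complex.exp (w.arg * Complex.I) := by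
      rw [hv, ← Complex.exp_nat_mul]
      congr 1
      have hm0 : (m : ℂ) ≠ 0 := by exact_mod_cast Nat.one_le_iff_ne_zero.mp hm
      field_simp
    refine ⟨(‖w‖ : ℂ) * v, ?_, ?_⟩
    · simp [norm_mul, hvabs, abs_of_nonneg (norm_nonneg w)]
    · have hwabs : (‖w‖ : ℂ) ≠ 0 := by simpa using hw
      have hz : (‖w‖ : ℂ) * v ≠ 0 := by
        apply mul_ne_zero hwabs
        rw [hv]; exact Complex.exp_ne_zero _
      rw [winding_ne_zero m hz]
      have habsz : ‖(‖w‖ : ℂ) * v‖ = ‖w‖ := by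
        simp [norm_mul, hvabs, abs_of_nonneg (norm_nonneg w)]
      rw [habsz, mul_div_cancel_left₀ v hwabs, hvm, Complex.norm_mul_exp_arg_mul_I]

lemma winding_rotate (m : ℕ) {z₀ : ℂ} (hz₀ : z₀ ≠ 0) (θ : ℝ) :
    winding m (z₀ * Complex.exp (θ * Complex.I)) =
      winding m z₀ * Complex.exp ((m * θ : ℝ) * Complex.I) := by
  have he : Complex.exp (θ * Complex.I) ≠ 0 := Complex.exp_ne_zero _
  have hz : z₀ * Complex.exp (θ * Complex.I) ≠ 0 := mul_ne_zero hz₀ he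
  have habs : ‖z₀ * Complex.exp (θ * Complex.I)‖ = ‖z₀‖ := by
    simp [norm_mul, Complex.norm_exp_ofReal_mul_I]
  rw [winding_ne_zero m hz, winding_ne_zero m hz₀, habs]
  rw [mul_div_right_comm, mul_pow, ← Complex.exp_nat_mul]
  push_cast
  ring_nf

/-- For `n ≥ 2`, identify `ℝⁿ` with `ℂ × ℝ^{n-2}` and define
`F_m(z, y) = (g_m(z), y)` (that is,
`(r cos φ, r sin φ, x₃, …, x_n) ↦ (r cos mφ, r sin mφ, x₃, …, x_n)`). Each `F_m`
(`m ≥ 1`) is continuous, fixes the origin, and maps the closed unit ball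
`{(z, y) : |z|² + ‖y‖² ≤ 1}` onto itself, yet the family `{F_m}` is not
equicontinuous (with respect to the Euclidean distance
`√(|z - z'|² + ‖y - y'‖²)`) at any point `(z₀, y₀)` of the unit sphere with
`z₀ ≠ 0`. -/
theorem winding_space_family_not_equicontinuous (n : ℕ) (hn : 2 ≤ n) :
    (∀ m : ℕ, 1 ≤ m →
      Continuous (fun p : ℂ × EuclideanSpace ℝ (Fin (n - 2)) => (winding m p.1, p.2))) ∧
    (∀ m : ℕ, 1 ≤ m →
      (fun p : ℂ × EuclideanSpace ℝ (Fin (n - 2)) => (winding m p.1, p.2))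
        ((0 : ℂ), (0 : EuclideanSpace ℝ (Fin (n - 2)))) = (0, 0)) ∧
    (∀ m : ℕ, 1 ≤ m →
      (fun p : ℂ × EuclideanSpace ℝ (Fin (n - 2)) => (winding m p.1, p.2)) ''
          {p : ℂ × EuclideanSpace ℝ (Fin (n - 2)) |
            ‖p.1‖ ^ 2 + ‖p.2‖ ^ 2 ≤ 1} =
        {p : ℂ × EuclideanSpace ℝ (Fin (n - 2)) |
          ‖p.1‖ ^ 2 + ‖p.2‖ ^ 2 ≤ 1}) ∧
    (∀ z₀ : ℂ, ∀ y₀ : EuclideanSpace ℝ (Fin (n - 2)),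
      ‖z₀‖ ^ 2 + ‖y₀‖ ^ 2 = 1 → z₀ ≠ 0 →
      ∃ ε₀ > (0 : ℝ), ∀ δ > (0 : ℝ), ∃ m : ℕ, 1 ≤ m ∧
        ∃ z : ℂ, ∃ y : EuclideanSpace ℝ (Fin (n - 2)),
          ‖z‖ ^ 2 + ‖y‖ ^ 2 ≤ 1 ∧
          Real.sqrt (‖z - z₀‖ ^ 2 + ‖y - y₀‖ ^ 2) < δ ∧
          ε₀ ≤ Real.sqrt (‖winding m z - winding m z₀‖ ^ 2 + ‖y - y₀‖ ^ 2)) := by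
  refine ⟨?_, ?_, ?_, ?_⟩
  · intro m _
    exact ((continuous_winding m).comp continuous_fst).prodMk continuous_snd
  · intro m _
    simp [winding_zero]
  · intro m hm
    ext ⟨w, y⟩
    constructor
    · rintro ⟨⟨z, y'⟩, hmem, heq⟩
      obtain ⟨h1, h2⟩ := Prod.mk.injEq .. ▸ heq
      simp only [Set.mem_setOf_eq] at hmem ⊢
      rw [← h1, ← h2, abs_winding]
      exact hmem
    · intro h
      obtain ⟨z, hzabs, hzw⟩ := winding_surj_abs m hm w
      refine ⟨(z, y), ?_, ?_⟩
      · simp only [Set.mem_setOf_eq] at h ⊢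
        rw [hzabs]; exact h
      · simp [hzw]
  · intro z₀ y₀ hsphere hz₀
    set r : ℝ := ‖z₀‖ with hr
    have hrpos : 0 < r := by simpa [hr] using hz₀
    refine ⟨r, hrpos, ?_⟩
    intro δ hδ
    obtain ⟨N, hN⟩ := exists_nat_gt (2 * Real.pi * r / δ)
    set m : ℕ := max N 4 with hmdef
    have hm4 : (4 : ℕ) ≤ m := le_max_right _ _
    have hm1 : 1 ≤ m := le_trans (by norm_num) hm4
    have hmN : (N : ℝ) ≤ m := by exact_mod_cast le_max_left N 4
    have hm0 : (0 : ℝ) < m := by positivity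
    have hmC : (m : ℂ) ≠ 0 := by exact_mod_cast hm1.trans_lt' Nat.zero_lt_one |>.ne'
    set θ : ℝ := Real.pi / m with hθ
    set z : ℂ := z₀ * Complex.exp (θ * Complex.I) with hz
    refine ⟨m, hm1, z, y₀, ?_, ?_, ?_⟩
    · have habs : ‖z‖ = r := by
        simp [hz, norm_mul, Complex.norm_exp_ofReal_mul_I, hr]
      rw [habs, hr]
      exact hsphere.le
    · have hy : ‖y₀ - y₀‖ ^ 2 = 0 := by simp
      rw [hy, add_zero, Real.sqrt_sq (norm_nonneg _)]
      have hdiff : z - z₀ = z₀ * (Complex.exp (θ * Complex.I) - 1) := by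
        rw [hz]; ring
      rw [hdiff, norm_mul]
      have hθpos : 0 < θ := by positivity
      have hθle1 : ‖(θ : ℂ) * Complex.I‖ ≤ 1 := by
        simp only [norm_mul, Complex.norm_I, mul_one, Complex.norm_real, Real.norm_eq_abs,
          abs_of_pos hθpos]
        rw [hθ, div_le_one hm0]
        calc Real.pi ≤ 4 := Real.pi_le_four
          _ ≤ m := by exact_mod_cast hm4
      have hexp : ‖Complex.exp ((θ : ℂ) * Complex.I) - 1‖ ≤
          2 * ‖(θ : ℂ) * Complex.I‖ := Complex.norm_exp_sub_one_le hθle1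
      have habsθ : ‖(θ : ℂ) * Complex.I‖ = θ := by
        simp [abs_of_pos hθpos]
      calc ‖z₀‖ * ‖Complex.exp ((θ : ℂ) * Complex.I) - 1‖
          ≤ r * (2 * θ) := by
            rw [← hr]
            exact mul_le_mul_of_nonneg_left (hexp.trans_eq (by rw [habsθ]))
              (norm_nonneg _)
        _ = 2 * Real.pi * r / m := by rw [hθ]; ring
        _ < δ := by
            rw [div_lt_iff₀ hm0]
            calc 2 * Real.pi * r < N * δ := (div_lt_iff₀ hδ).mp hN
              _ ≤ m * δ := mul_le_mul_of_nonneg_right hmN hδ.le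
              _ = δ * m := by ring
    · have hwind : winding m z = - winding m z₀ := by
        rw [hz, winding_rotate m hz₀ θ]
        have : (m : ℝ) * θ = Real.pi := by
          rw [hθ]; field_simp
        rw [this, Complex.exp_pi_mul_I, mul_neg_one]
      rw [hwind]
      have h2 : ‖-winding m z₀ - winding m z₀‖ = 2 * r := by
        have : -winding m z₀ - winding m z₀ = -(2 * winding m z₀) := by ring
        rw [this, norm_neg, norm_mul, abs_winding, ← hr]
        simp
      rw [h2]
      have hy : ‖y₀ - y₀‖ ^ 2 = 0 := by simp
      rw [hy, add_zero, Real.sqrt_sq (by positivity)]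
      linarith
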